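/- Let M~ be the action-visible augmented MDP built from a finite MDP M, a defender state-observation function DObs_S, the user objective φ0 = ¬U0 𝖴 F0 and the attacker objective φ1 = ¬U1 𝖴 F1. Let π~ be a Markov strategy of M~ that is almost-sure winning from (s0, DObs_S(s0)) for ¬U~1 𝖴 F~1, and let π~1 be the finite-memory strategy it induces on M. Then Pr_{s0}(¬U1 𝖴 F1; M_{π~1}) = 1; that is, π~1 is almost-sure winning in M for the attacker's reach-avoid objective. -/

import Mathlib

open scoped BigOperators Classical

/-- A finite Markov decision process: finite state set `S`, finite action set `A`,
nonempty enabled-action sets, an initial state, and a transition kernel that is a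
probability distribution on `S` for every state and enabled action. -/
structure MDP (S A : Type) [Fintype S] [Fintype A] where
  act : S → Finset A
  act_nonempty : ∀ s, (act s).Nonempty
  init : S
  P : S → A → S → ℝ
  P_nonneg : ∀ s a s', 0 ≤ P s a s'
  P_sum_one : ∀ s, ∀ a ∈ act s, (∑ s', P s a s') = 1

variable {S A : Type} [Fintype S] [Fintype A]

/-- `Post(s,a)`: states reachable with positive probability. -/
def post (M : MDP S A) (s : S) (a : A) : Set S := {s' | 0 < M.P s a s'}

/-- The last state of a history `(s, l)` (state `s` followed by action-state steps `l`). -/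
def lastState (s : S) (l : List (A × S)) : S :=
  (l.getLast?.map Prod.snd).getD s

/-- `(s, l)` is a (valid) history of `M`: each action is enabled and each transition
has positive probability. -/
def isHist (M : MDP S A) : S → List (A × S) → Prop
  | _, [] => True
  | s, (a, s') :: rest => a ∈ M.act s ∧ 0 < M.P s a s' ∧ isHist M s' rest

/-- The `i`-th state of the history `(s, l)`. -/
def stateAt (s : S) (l : List (A × S)) : ℕ → S
  | 0 => s
  | i + 1 => ((l[i]?).map Prod.snd).getD s

/-- `Occ(h)`: the set of states occurring in the history `(s, l)`. -/
def occ (s : S) (l : List (A × S)) : Set S :=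
  insert s {t | t ∈ l.map Prod.snd}

/-- The history `(s, l)` satisfies the reach-avoid objective `¬U 𝖴 F`. -/
def satRA (U F : Set S) (s : S) (l : List (A × S)) : Prop :=
  ∃ k ≤ l.length, stateAt s l k ∈ F ∧ ∀ i < k, stateAt s l i ∉ U ∪ F

/-- Probability of the continuation `l` of the history `(s0, pre)` under strategy `π`. -/
noncomputable def prFrom (M : MDP S A) (π : S → List (A × S) → A → ℝ) :
    S → List (A × S) → List (A × S) → ℝ
  | _, _, [] => 1
  | s0, pre, (a, s') :: rest =>
      π s0 pre a * M.P (lastState s0 pre) a s' * prFrom M π s0 (pre ++ [(a, s')]) rest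

/-- `Pr(h; M_π)`: the probability of the history `h = (s, l)` under strategy `π`. -/
noncomputable def prHist (M : MDP S A) (π : S → List (A × S) → A → ℝ)
    (s : S) (l : List (A × S)) : ℝ :=
  prFrom M π s [] l

/-- A (randomized, history-dependent) strategy: maps each history to a probability
distribution over the actions enabled at its last state. -/
structure Strategy (M : MDP S A) where
  toFun : S → List (A × S) → A → ℝ
  nonneg : ∀ s l a, 0 ≤ toFun s l a
  sum_one : ∀ s l, (∑ a, toFun s l a) = 1
  support_mem : ∀ s l a, 0 < toFun s l a → a ∈ M.act (lastState s l)

/-- A (randomized) Markov strategy: maps each state to a probability distribution over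
the actions enabled at that state. -/
structure MarkovStrategy (M : MDP S A) where
  toFun : S → A → ℝ
  nonneg : ∀ s a, 0 ≤ toFun s a
  sum_one : ∀ s, (∑ a, toFun s a) = 1
  support_mem : ∀ s a, 0 < toFun s a → a ∈ M.act s

/-- The history-dependent strategy induced by a Markov strategy. -/
def MarkovStrategy.strat {M : MDP S A} (σ : MarkovStrategy M) : Strategy M where
  toFun s l a := σ.toFun (lastState s l) a
  nonneg s l a := σ.nonneg _ a
  sum_one s l := σ.sum_one _
  support_mem s l a h := σ.support_mem _ a h

/-- Sum of `Pr(h; M_π)` over all histories `h` of length `n` starting at `s` that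
satisfy the reach-avoid objective `¬U 𝖴 F`. -/
noncomputable def satProbN (M : MDP S A) (π : S → List (A × S) → A → ℝ)
    (U F : Set S) (s : S) (n : ℕ) : ℝ :=
  ∑ f : Fin n → A × S,
    if isHist M s (List.ofFn f) ∧ satRA U F s (List.ofFn f)
    then prHist M π s (List.ofFn f) else 0

/-- `Pr_s(¬U 𝖴 F; M_π)`: supremum over `n` of `satProbN`. -/
noncomputable def prSat (M : MDP S A) (π : S → List (A × S) → A → ℝ)
    (U F : Set S) (s : S) : ℝ :=
  ⨆ n : ℕ, satProbN M π U F s n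

/-- The almost-sure winning region `ASW(¬U 𝖴 F)`. -/
def ASW (M : MDP S A) (U F : Set S) : Set S :=
  {s | ∃ π : Strategy M, prSat M π.toFun U F s = 1}

/-- `Allowed(s)`: enabled actions keeping the agent inside `ASW(¬U 𝖴 F)`
(empty for `s ∉ ASW(¬U 𝖴 F)`). -/
def allowed (M : MDP S A) (U F : Set S) (s : S) : Set A :=
  {a | s ∈ ASW M U F ∧ a ∈ M.act s ∧ post M s a ⊆ ASW M U F}

/-- A defender state-observation function: observation-equivalence classes partition the
state space and observation-equivalent states have the same enabled actions. -/
structure ObsFun (M : MDP S A) where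
  obs : S → Set S
  mem_self : ∀ s, s ∈ obs s
  eq_of_mem : ∀ s s', s' ∈ obs s → obs s' = obs s
  act_eq : ∀ s s', s' ∈ obs s → M.act s' = M.act s

/-- Action-visible belief update `Update_v(B, a, s'')`. -/
def updateV (M : MDP S A) (O : ObsFun M) (U0 F0 : Set S)
    (B : Set S) (a : A) (s'' : S) : Set S :=
  {s' | ∃ so ∈ B, a ∈ allowed M U0 F0 so ∧ s' ∈ post M so a ∧ O.obs s' = O.obs s''}

/-- Action-invisible belief update `Update_inv(B, s'')`. -/
def updateInv (M : MDP S A) (O : ObsFun M) (U0 F0 : Set S)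
    (B : Set S) (s'' : S) : Set S :=
  {s' | ∃ so ∈ B, ∃ ao ∈ allowed M U0 F0 so, s' ∈ post M so ao ∧ O.obs s' = O.obs s''}

/-- The unsafe set `U~1 = {(s,B) : s ∈ U1, B ≠ ∅} ∪ {(s,∅) : s ∈ S}` of the
augmented MDP. -/
def augU (U1 : Set S) : Set (S × Set S) :=
  {p | (p.1 ∈ U1 ∧ p.2 ≠ ∅) ∨ p.2 = ∅}

/-- The target set `F~1 = F1 × (2^S \ {∅})` of the augmented MDP. -/
def augF (F1 : Set S) : Set (S × Set S) :=
  {p | p.1 ∈ F1 ∧ p.2 ≠ ∅}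

/-- The action-visible augmented MDP `M~`. -/
noncomputable def augV (M : MDP S A) (O : ObsFun M) (U0 F0 : Set S) :
    MDP (S × Set S) A where
  act p := M.act p.1
  act_nonempty p := M.act_nonempty p.1
  init := (M.init, O.obs M.init)
  P p a q :=
    if p.2.Nonempty ∧ ∃ so ∈ p.2, a ∈ allowed M U0 F0 so then
      (if q.2 = updateV M O U0 F0 p.2 a q.1 then M.P p.1 a q.1 else 0)
    else (if q = (p.1, (∅ : Set S)) then 1 else 0)
  P_nonneg := by
    intro p a q
    split_ifs <;> first | exact M.P_nonneg _ _ _ | norm_num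
  P_sum_one := by
    intro p a ha
    by_cases hc : p.2.Nonempty ∧ ∃ so ∈ p.2, a ∈ allowed M U0 F0 so
    · simp only [if_pos hc]
      rw [Fintype.sum_prod_type]
      have : ∀ t : S,
          (∑ C : Set S, if C = updateV M O U0 F0 p.2 a t then M.P p.1 a t else 0)
            = M.P p.1 a t := by
        intro t
        simp [Finset.sum_ite_eq']
      simp only [this]
      exact M.P_sum_one p.1 a ha
    · simp only [if_neg hc]
      simp [Finset.sum_ite_eq']

/-- The action-invisible augmented MDP `M^`. -/
noncomputable def augInv (M : MDP S A) (O : ObsFun M) (U0 F0 : Set S) :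
    MDP (S × Set S) A where
  act p := M.act p.1
  act_nonempty p := M.act_nonempty p.1
  init := (M.init, O.obs M.init)
  P p a q :=
    if (∃ so ∈ p.2, a ∈ allowed M U0 F0 so) ∧ a ∈ M.act p.1 then
      (if q.2 = updateInv M O U0 F0 p.2 q.1 then M.P p.1 a q.1 else 0)
    else (if q = (p.1, (∅ : Set S)) then 1 else 0)
  P_nonneg := by
    intro p a q
    split_ifs <;> first | exact M.P_nonneg _ _ _ | norm_num
  P_sum_one := by
    intro p a ha
    by_cases hc : (∃ so ∈ p.2, a ∈ allowed M U0 F0 so) ∧ a ∈ M.act p.1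
    · simp only [if_pos hc]
      rw [Fintype.sum_prod_type]
      have : ∀ t : S,
          (∑ C : Set S, if C = updateInv M O U0 F0 p.2 t then M.P p.1 a t else 0)
            = M.P p.1 a t := by
        intro t
        simp [Finset.sum_ite_eq']
      simp only [this]
      exact M.P_sum_one p.1 a ha
    · simp only [if_neg hc]
      simp [Finset.sum_ite_eq']

/-- The defender's belief after observing (states and actions of) the history `(s0, l)`,
for an action-visible defender: `B0 = DObs_S(s0)`, `B(i+1) = Update_v(Bi, ai, s(i+1))`. -/
def beliefV (M : MDP S A) (O : ObsFun M) (U0 F0 : Set S)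
    (s0 : S) (l : List (A × S)) : Set S :=
  l.foldl (fun B p => updateV M O U0 F0 B p.1 p.2) (O.obs s0)

/-- The defender's belief after observing (the states of) the history `(s0, l)`,
for an action-invisible defender: `B0 = DObs_S(s0)`, `B(i+1) = Update_inv(Bi, s(i+1))`. -/
def beliefInv (M : MDP S A) (O : ObsFun M) (U0 F0 : Set S)
    (s0 : S) (l : List (A × S)) : Set S :=
  l.foldl (fun B p => updateInv M O U0 F0 B p.2) (O.obs s0)

/-- The finite-memory strategy on `M` induced by a Markov strategy of the action-visible
augmented MDP `M~`. -/
noncomputable def inducedV (M : MDP S A) (O : ObsFun M) (U0 F0 : Set S)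
    (σ : MarkovStrategy (augV M O U0 F0)) : Strategy M where
  toFun s l a := σ.toFun (lastState s l, beliefV M O U0 F0 s l) a
  nonneg s l a := σ.nonneg _ a
  sum_one s l := σ.sum_one _
  support_mem s l a h := σ.support_mem _ a h

/-- The finite-memory strategy on `M` induced by a Markov strategy of the
action-invisible augmented MDP `M^`. -/
noncomputable def inducedInv (M : MDP S A) (O : ObsFun M) (U0 F0 : Set S)
    (σ : MarkovStrategy (augInv M O U0 F0)) : Strategy M where
  toFun s l a := σ.toFun (lastState s l, beliefInv M O U0 F0 s l) a
  nonneg s l a := σ.nonneg _ a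
  sum_one s l := σ.sum_one _
  support_mem s l a h := σ.support_mem _ a h

/-- A ranking witness `(W, r)` for the reach-avoid objective `¬U 𝖴 F`. -/
def rankWitness (M : MDP S A) (U F : Set S) (W : Set S) (r : S → ℕ) : Prop :=
  W ∩ U = ∅ ∧
  ∀ s ∈ W \ F, ∃ a ∈ M.act s, post M s a ⊆ W ∧
    (post M s a ∩ {t ∈ W | r t < r s}).Nonempty

/-! ### Auxiliary lemmas -/

section Aux

lemma lastState_nil (s : S) : lastState s ([] : List (A × S)) = s := rfl

lemma lastState_concat (s : S) (pre : List (A × S)) (a : A) (s' : S) :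
    lastState s (pre ++ [(a, s')]) = s' := by
  simp [lastState]

lemma lastState_cons (s : S) (a : A) (s' : S) (l : List (A × S)) :
    lastState s ((a, s') :: l) = lastState s' l := by
  cases l with
  | nil => rfl
  | cons x xs =>
      have h : ((x :: xs).getLast?).isSome := by
        cases hx : (x :: xs).getLast? with
        | none => simp at hx
        | some y => rfl
      obtain ⟨y, hy⟩ := Option.isSome_iff_exists.mp h
      simp [lastState, List.getLast?_cons_cons, hy]

lemma prFrom_nonneg (M : MDP S A) (π : Strategy M) :
    ∀ (l : List (A × S)) (s0 : S) (pre : List (A × S)), 0 ≤ prFrom M π.toFun s0 pre l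
  | [], _, _ => by simp [prFrom]
  | (a, s') :: rest, s0, pre => by
      have h3 := prFrom_nonneg M π rest s0 (pre ++ [(a, s')])
      have h1 := π.nonneg s0 pre a
      have h2 := M.P_nonneg (lastState s0 pre) a s'
      simp only [prFrom]
      exact mul_nonneg (mul_nonneg h1 h2) h3

lemma stateAt_append (s : S) (l1 l2 : List (A × S)) (i : ℕ) (h : i ≤ l1.length) :
    stateAt s (l1 ++ l2) i = stateAt s l1 i := by
  cases i with
  | zero => rfl
  | succ i =>
      have hi : i < l1.length := h
      simp [stateAt, List.getElem?_append, hi]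

lemma stateAt_length (s : S) (l : List (A × S)) :
    stateAt s l l.length = lastState s l := by
  cases l with
  | nil => rfl
  | cons x xs =>
      simp [stateAt, lastState, List.getLast?_eq_getElem?]

lemma isHist_append (M : MDP S A) (l1 : List (A × S)) :
    ∀ (l2 : List (A × S)) (s : S),
      isHist M s (l1 ++ l2) ↔ isHist M s l1 ∧ isHist M (lastState s l1) l2 := by
  induction l1 with
  | nil => intro l2 s; simp [isHist, lastState]
  | cons x rest ih =>
      obtain ⟨a, s'⟩ := x
      intro l2 s
      simp only [List.cons_append, isHist, List.append_eq, lastState_cons, ih l2 s', and_assoc]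

lemma prFrom_append (M : MDP S A) (π : Strategy M) :
    ∀ (l1 l2 : List (A × S)) (s0 : S) (pre : List (A × S)),
      prFrom M π.toFun s0 pre (l1 ++ l2)
        = prFrom M π.toFun s0 pre l1 * prFrom M π.toFun s0 (pre ++ l1) l2
  | [], l2, s0, pre => by simp [prFrom]
  | (a, s') :: rest, l2, s0, pre => by
      have h := prFrom_append M π rest l2 s0 (pre ++ [(a, s')])
      simp only [List.cons_append, prFrom, List.append_eq] at h ⊢
      rw [h, List.append_assoc, List.singleton_append]
      ring

/-- Sum over all valid continuations equals 1. -/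
lemma contSum (M : MDP S A) (π : Strategy M) :
    ∀ (n : ℕ) (s0 : S) (pre : List (A × S)),
      (∑ f : Fin n → A × S,
        if isHist M (lastState s0 pre) (List.ofFn f)
        then prFrom M π.toFun s0 pre (List.ofFn f) else 0) = 1 := by
  intro n
  induction n with
  | zero =>
      intro s0 pre
      simp [List.ofFn_zero, isHist, prFrom]
  | succ n ih =>
      intro s0 pre
      rw [← Equiv.sum_comp (Fin.consEquiv (fun _ : Fin (n+1) => A × S))]
      rw [Fintype.sum_prod_type]
      have key : ∀ x : A × S,
          (∑ g : Fin n → A × S,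
            if isHist M (lastState s0 pre)
                (List.ofFn ((Fin.consEquiv (fun _ : Fin (n+1) => A × S)) (x, g)))
            then prFrom M π.toFun s0 pre
                (List.ofFn ((Fin.consEquiv (fun _ : Fin (n+1) => A × S)) (x, g))) else 0)
          = π.toFun s0 pre x.1 * M.P (lastState s0 pre) x.1 x.2 := by
        rintro ⟨a, s'⟩
        have hofn : ∀ g : Fin n → A × S,
            List.ofFn ((Fin.consEquiv (fun _ : Fin (n+1) => A × S)) ((a, s'), g))
              = (a, s') :: List.ofFn g := by
          intro g
          rw [List.ofFn_succ]
          simp [Fin.consEquiv]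
        have hterm : ∀ g : Fin n → A × S,
            (if isHist M (lastState s0 pre) ((a, s') :: List.ofFn g)
              then prFrom M π.toFun s0 pre ((a, s') :: List.ofFn g) else 0)
            = π.toFun s0 pre a * M.P (lastState s0 pre) a s' *
                (if isHist M s' (List.ofFn g)
                  then prFrom M π.toFun s0 (pre ++ [(a, s')]) (List.ofFn g) else 0) := by
          intro g
          by_cases ha : a ∈ M.act (lastState s0 pre)
          · by_cases hP : 0 < M.P (lastState s0 pre) a s'
            · by_cases hr : isHist M s' (List.ofFn g)
              · rw [if_pos ⟨ha, hP, hr⟩, if_pos hr]; simp [prFrom]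
              · rw [if_neg (by simp [isHist, hr]), if_neg hr]; ring
            · have hP0 : M.P (lastState s0 pre) a s' = 0 :=
                le_antisymm (not_lt.mp hP) (M.P_nonneg _ _ _)
              rw [if_neg (by simp [isHist, hP])]
              rw [hP0]; ring
          · have hπ0 : π.toFun s0 pre a = 0 := by
              by_contra h
              exact ha (π.support_mem s0 pre a
                (lt_of_le_of_ne (π.nonneg s0 pre a) (Ne.symm h)))
            rw [if_neg (by simp [isHist, ha])]
            rw [hπ0]; ring
        calc (∑ g : Fin n → A × S,
                if isHist M (lastState s0 pre)
                    (List.ofFn ((Fin.consEquiv (fun _ : Fin (n+1) => A × S)) ((a, s'), g)))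
                then prFrom M π.toFun s0 pre
                    (List.ofFn ((Fin.consEquiv (fun _ : Fin (n+1) => A × S)) ((a, s'), g))) else 0)
            = ∑ g : Fin n → A × S,
                π.toFun s0 pre a * M.P (lastState s0 pre) a s' *
                  (if isHist M s' (List.ofFn g)
                    then prFrom M π.toFun s0 (pre ++ [(a, s')]) (List.ofFn g) else 0) := by
              refine Finset.sum_congr rfl fun g _ => ?_
              rw [hofn g, hterm g]
          _ = π.toFun s0 pre a * M.P (lastState s0 pre) a s' := by
              rw [← Finset.mul_sum]
              have := ih s0 (pre ++ [(a, s')])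
              rw [lastState_concat] at this
              rw [this, mul_one]
      calc (∑ x : A × S, ∑ g : Fin n → A × S,
              if isHist M (lastState s0 pre)
                  (List.ofFn ((Fin.consEquiv (fun _ : Fin (n+1) => A × S)) (x, g)))
              then prFrom M π.toFun s0 pre
                  (List.ofFn ((Fin.consEquiv (fun _ : Fin (n+1) => A × S)) (x, g))) else 0)
          = ∑ x : A × S, π.toFun s0 pre x.1 * M.P (lastState s0 pre) x.1 x.2 :=
            Finset.sum_congr rfl fun x _ => key x
        _ = ∑ a : A, π.toFun s0 pre a * ∑ s' : S, M.P (lastState s0 pre) a s' := by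
            rw [Fintype.sum_prod_type]
            exact Finset.sum_congr rfl fun a _ => by rw [Finset.mul_sum]
        _ = ∑ a : A, π.toFun s0 pre a := by
            refine Finset.sum_congr rfl fun a _ => ?_
            rcases eq_or_lt_of_le (π.nonneg s0 pre a) with h | h
            · rw [← h]; ring
            · rw [M.P_sum_one _ a (π.support_mem s0 pre a h), mul_one]
        _ = 1 := π.sum_one s0 pre

end Aux

section Aux2

/-- `Q k`: the history first hits `F` exactly at time `k`. -/
def QRA (U F : Set S) (s : S) (l : List (A × S)) (k : ℕ) : Prop :=
  stateAt s l k ∈ F ∧ ∀ i < k, stateAt s l i ∉ U ∪ F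

lemma QRA_unique {U F : Set S} {s : S} {l : List (A × S)} {k k' : ℕ}
    (h : QRA U F s l k) (h' : QRA U F s l k') : k = k' := by
  by_contra hne
  rcases Nat.lt_or_ge k k' with hlt | hge
  · exact h'.2 k hlt (Set.mem_union_right U h.1)
  · exact h.2 k' (lt_of_le_of_ne hge fun e => hne e.symm) (Set.mem_union_right U h'.1)

lemma satRA_iff (U F : Set S) (s : S) (l : List (A × S)) :
    satRA U F s l ↔ ∃ k ≤ l.length, QRA U F s l k := Iff.rfl

/-- Probability of first hitting `F` (avoiding `U`) exactly at time `k`. -/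
noncomputable def hitProbN (M : MDP S A) (π : S → List (A × S) → A → ℝ)
    (U F : Set S) (s : S) (k : ℕ) : ℝ :=
  ∑ f : Fin k → A × S,
    if isHist M s (List.ofFn f) ∧ QRA U F s (List.ofFn f) k
    then prHist M π s (List.ofFn f) else 0

lemma QRA_append (U F : Set S) (s : S) (l1 l2 : List (A × S)) :
    QRA U F s (l1 ++ l2) l1.length ↔ QRA U F s l1 l1.length := by
  unfold QRA
  constructor
  · rintro ⟨h1, h2⟩
    exact ⟨by rwa [stateAt_append s l1 l2 _ le_rfl] at h1,
      fun i hi => by rw [← stateAt_append s l1 l2 i (le_of_lt hi)]; exact h2 i hi⟩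
  · rintro ⟨h1, h2⟩
    exact ⟨by rwa [stateAt_append s l1 l2 _ le_rfl],
      fun i hi => by rw [stateAt_append s l1 l2 i (le_of_lt hi)]; exact h2 i hi⟩

lemma sum_Q_split (M : MDP S A) (π : Strategy M) (U F : Set S) (s : S) {k n : ℕ}
    (hk : k ≤ n) :
    (∑ f : Fin n → A × S,
      if isHist M s (List.ofFn f) ∧ QRA U F s (List.ofFn f) k
      then prHist M π.toFun s (List.ofFn f) else 0)
    = hitProbN M π.toFun U F s k := by
  obtain ⟨m, rfl⟩ : ∃ m, n = k + m := ⟨n - k, (Nat.add_sub_cancel' hk).symm⟩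
  classical
  set e : ((Fin k → A × S) × (Fin m → A × S)) ≃ (Fin (k + m) → A × S) :=
    (Equiv.sumArrowEquivProdArrow _ _ _).symm.trans
      (Equiv.arrowCongr finSumFinEquiv (Equiv.refl _)) with he
  rw [← Equiv.sum_comp e]
  have hof : ∀ (p : Fin k → A × S) (t : Fin m → A × S),
      List.ofFn (e (p, t)) = List.ofFn p ++ List.ofFn t := by
    intro p t
    rw [List.ofFn_add]
    congr 1
    · congr 1
      funext i
      simp [he, Equiv.sumArrowEquivProdArrow, Equiv.arrowCongr,
        finSumFinEquiv_symm_apply_castAdd]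
      exact congrArg (Sum.elim p t) (finSumFinEquiv_symm_apply_castAdd i)
    · congr 1
      funext i
      simp [he, Equiv.sumArrowEquivProdArrow, Equiv.arrowCongr,
        finSumFinEquiv_symm_apply_natAdd]
  rw [Fintype.sum_prod_type]
  have hterm : ∀ (p : Fin k → A × S) (t : Fin m → A × S),
      (if isHist M s (List.ofFn (e (p, t))) ∧ QRA U F s (List.ofFn (e (p, t))) k
        then prHist M π.toFun s (List.ofFn (e (p, t))) else 0)
      = (if isHist M s (List.ofFn p) ∧ QRA U F s (List.ofFn p) k
          then prHist M π.toFun s (List.ofFn p) else 0) *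
        (if isHist M (lastState s (List.ofFn p)) (List.ofFn t)
          then prFrom M π.toFun s (List.ofFn p) (List.ofFn t) else 0) := by
    intro p t
    rw [hof p t]
    have hlen : (List.ofFn p).length = k := List.length_ofFn
    have hQ : QRA U F s (List.ofFn p ++ List.ofFn t) k ↔ QRA U F s (List.ofFn p) k := by
      have h := QRA_append U F s (List.ofFn p) (List.ofFn t)
      rwa [hlen] at h
    have hpr : prHist M π.toFun s (List.ofFn p ++ List.ofFn t)
        = prHist M π.toFun s (List.ofFn p) *
          prFrom M π.toFun s (List.ofFn p) (List.ofFn t) := by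
      unfold prHist
      rw [prFrom_append M π, List.nil_append]
    rw [isHist_append M]
    by_cases h1 : isHist M s (List.ofFn p)
    · by_cases h2 : QRA U F s (List.ofFn p) k
      · by_cases h3 : isHist M (lastState s (List.ofFn p)) (List.ofFn t)
        · rw [if_pos ⟨⟨h1, h3⟩, hQ.mpr h2⟩, if_pos ⟨h1, h2⟩, if_pos h3, hpr]
        · rw [if_neg (by tauto), if_pos ⟨h1, h2⟩, if_neg h3, mul_zero]
      · rw [if_neg (by tauto), if_neg (by tauto), zero_mul]
    · rw [if_neg (by tauto), if_neg (by tauto), zero_mul]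
  calc (∑ p : Fin k → A × S, ∑ t : Fin m → A × S,
          if isHist M s (List.ofFn (e (p, t))) ∧ QRA U F s (List.ofFn (e (p, t))) k
          then prHist M π.toFun s (List.ofFn (e (p, t))) else 0)
      = ∑ p : Fin k → A × S,
          (if isHist M s (List.ofFn p) ∧ QRA U F s (List.ofFn p) k
            then prHist M π.toFun s (List.ofFn p) else 0) *
          (∑ t : Fin m → A × S,
            if isHist M (lastState s (List.ofFn p)) (List.ofFn t)
              then prFrom M π.toFun s (List.ofFn p) (List.ofFn t) else 0) := by
        refine Finset.sum_congr rfl fun p _ => ?_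
        rw [Finset.mul_sum]
        exact Finset.sum_congr rfl fun t _ => hterm p t
    _ = hitProbN M π.toFun U F s k := by
        unfold hitProbN
        refine Finset.sum_congr rfl fun p _ => ?_
        rw [contSum M π m s (List.ofFn p), mul_one]

lemma satProbN_eq (M : MDP S A) (π : Strategy M) (U F : Set S) (s : S) (n : ℕ) :
    satProbN M π.toFun U F s n
      = ∑ k ∈ Finset.range (n + 1), hitProbN M π.toFun U F s k := by
  classical
  unfold satProbN
  have hterm : ∀ f : Fin n → A × S,
      (if isHist M s (List.ofFn f) ∧ satRA U F s (List.ofFn f)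
        then prHist M π.toFun s (List.ofFn f) else 0)
      = ∑ k ∈ Finset.range (n + 1),
          (if isHist M s (List.ofFn f) ∧ QRA U F s (List.ofFn f) k
            then prHist M π.toFun s (List.ofFn f) else 0) := by
    intro f
    have hlen : (List.ofFn f).length = n := List.length_ofFn
    by_cases hh : isHist M s (List.ofFn f)
    · by_cases hs : satRA U F s (List.ofFn f)
      · obtain ⟨k0, hk0le, hQ0⟩ := hs
        rw [if_pos ⟨hh, ⟨k0, hk0le, hQ0⟩⟩]
        rw [Finset.sum_eq_single k0]
        · rw [if_pos ⟨hh, hQ0⟩]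
        · intro k _ hne
          rw [if_neg]
          rintro ⟨-, hQ⟩
          exact hne (QRA_unique hQ hQ0)
        · intro hk
          exact absurd (Finset.mem_range.mpr (Nat.lt_succ_of_le (hlen ▸ hk0le))) hk
      · rw [if_neg fun h => hs h.2]
        symm
        apply Finset.sum_eq_zero
        intro k hk
        rw [if_neg]
        rintro ⟨-, hQ⟩
        exact hs ⟨k, hlen.symm ▸ Nat.lt_succ_iff.mp (Finset.mem_range.mp hk), hQ⟩
    · rw [if_neg fun h => hh h.1]
      symm
      apply Finset.sum_eq_zero
      intro k _
      rw [if_neg fun h => hh h.1]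
  rw [Finset.sum_congr rfl fun f _ => hterm f, Finset.sum_comm]
  exact Finset.sum_congr rfl fun k hk =>
    sum_Q_split M π U F s (Nat.lt_succ_iff.mp (Finset.mem_range.mp hk))

lemma satProbN_le_one (M : MDP S A) (π : Strategy M) (U F : Set S) (s : S) (n : ℕ) :
    satProbN M π.toFun U F s n ≤ 1 := by
  have h := contSum M π n s []
  rw [show lastState s ([] : List (A × S)) = s from rfl] at h
  rw [← h]
  unfold satProbN
  refine Finset.sum_le_sum fun f _ => ?_
  by_cases hh : isHist M s (List.ofFn f)
  · by_cases hs : satRA U F s (List.ofFn f)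
    · rw [if_pos ⟨hh, hs⟩, if_pos hh]
      exact le_of_eq rfl
    · rw [if_neg fun h => hs h.2, if_pos hh]
      exact prFrom_nonneg M π _ s []
  · rw [if_neg fun h => hh h.1, if_neg hh]

end Aux2

section Aux3

/-- Project an augmented history to a base history. -/
def projL : List (A × (S × Set S)) → List (A × S) :=
  List.map fun p => (p.1, p.2.1)

/-- Lift a base history to an augmented history by computing beliefs. -/
def liftL (M : MDP S A) (O : ObsFun M) (U0 F0 : Set S) :
    Set S → List (A × S) → List (A × (S × Set S))
  | _, [] => []
  | B, (a, s') :: r =>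
      (a, (s', updateV M O U0 F0 B a s')) ::
        liftL M O U0 F0 (updateV M O U0 F0 B a s') r

lemma augP_pos (M : MDP S A) (O : ObsFun M) (U0 F0 : Set S)
    {s : S} {B : Set S} {a : A} {s' : S} {B' : Set S}
    (h : 0 < (augV M O U0 F0).P (s, B) a (s', B')) (hB' : B' ≠ (∅ : Set S)) :
    B' = updateV M O U0 F0 B a s' ∧ 0 < M.P s a s' ∧
      (augV M O U0 F0).P (s, B) a (s', B') = M.P s a s' := by
  classical
  by_cases hc : B.Nonempty ∧ ∃ so ∈ B, a ∈ allowed M U0 F0 so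
  · simp only [augV, if_pos hc] at h ⊢
    by_cases hBe : B' = updateV M O U0 F0 B a s'
    · rw [if_pos hBe] at h ⊢
      exact ⟨hBe, h, rfl⟩
    · rw [if_neg hBe] at h
      exact absurd h (lt_irrefl 0)
  · simp only [augV, if_neg hc] at h
    by_cases he : ((s', B') : S × Set S) = (s, (∅ : Set S))
    · exact absurd (congrArg Prod.snd he) hB'
    · rw [if_neg he] at h
      exact absurd h (lt_irrefl 0)

lemma reconstruct (M : MDP S A) (O : ObsFun M) (U0 F0 : Set S) :
    ∀ (lt : List (A × (S × Set S))) (s : S) (B : Set S),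
      isHist (augV M O U0 F0) (s, B) lt →
      (∀ p ∈ lt, p.2.2 ≠ (∅ : Set S)) →
      lt = liftL M O U0 F0 B (projL lt) ∧ isHist M s (projL lt)
  | [], s, B, _, _ => ⟨rfl, trivial⟩
  | (a, q) :: r, s, B, hh, hB => by
      obtain ⟨s', B'⟩ := q
      obtain ⟨ha, hP, hr⟩ := hh
      have hB' : B' ≠ (∅ : Set S) := hB (a, (s', B')) (List.mem_cons_self)
      obtain ⟨hupd, hMP, -⟩ := augP_pos M O U0 F0 hP hB'
      have ih := reconstruct M O U0 F0 r s' B' hr fun p hp => hB p (List.mem_cons_of_mem _ hp)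
      constructor
      · have ih1 := ih.1
        simp only [projL] at ih1 ⊢
        simp only [List.map_cons, liftL]
        rw [← hupd, ← ih1]
      · exact ⟨ha, hMP, ih.2⟩

lemma stateAt_projL (s0 : S) (B0 : Set S) (lt : List (A × (S × Set S))) (i : ℕ) :
    stateAt s0 (projL lt) i = (stateAt (s0, B0) lt i).1 := by
  cases i with
  | zero => rfl
  | succ i =>
      simp only [stateAt, projL, List.getElem?_map]
      cases lt[i]? with
      | none => rfl
      | some p => rfl

lemma beliefV_concat (M : MDP S A) (O : ObsFun M) (U0 F0 : Set S)
    (s0 : S) (pre : List (A × S)) (a : A) (s' : S) :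
    beliefV M O U0 F0 s0 (pre ++ [(a, s')])
      = updateV M O U0 F0 (beliefV M O U0 F0 s0 pre) a s' := by
  unfold beliefV
  rw [List.foldl_concat]

lemma prFrom_lift (M : MDP S A) (O : ObsFun M) (U0 F0 : Set S)
    (σ : MarkovStrategy (augV M O U0 F0)) :
    ∀ (l : List (A × S)) (pre : List (A × S)) (pret : List (A × (S × Set S))),
      lastState (M.init, O.obs M.init) pret
        = (lastState M.init pre, beliefV M O U0 F0 M.init pre) →
      isHist (augV M O U0 F0) (lastState M.init pre, beliefV M O U0 F0 M.init pre)
        (liftL M O U0 F0 (beliefV M O U0 F0 M.init pre) l) →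
      (∀ p ∈ liftL M O U0 F0 (beliefV M O U0 F0 M.init pre) l, p.2.2 ≠ (∅ : Set S)) →
      prFrom (augV M O U0 F0) σ.strat.toFun (M.init, O.obs M.init) pret
          (liftL M O U0 F0 (beliefV M O U0 F0 M.init pre) l)
        = prFrom M (inducedV M O U0 F0 σ).toFun M.init pre l
  | [], pre, pret, _, _, _ => by simp [liftL, prFrom]
  | (a, s') :: r, pre, pret, hlast, hh, hB => by
      simp only [liftL] at hh hB ⊢
      obtain ⟨ha, hP, hr⟩ := hh
      have hB' : updateV M O U0 F0 (beliefV M O U0 F0 M.init pre) a s' ≠ (∅ : Set S) :=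
        hB _ (List.mem_cons_self)
      obtain ⟨-, -, hPval⟩ := augP_pos M O U0 F0 hP hB'
      have hlast' : lastState (M.init, O.obs M.init)
            (pret ++ [(a, (s', updateV M O U0 F0 (beliefV M O U0 F0 M.init pre) a s'))])
          = (lastState M.init (pre ++ [(a, s')]),
              beliefV M O U0 F0 M.init (pre ++ [(a, s')])) := by
        rw [lastState_concat, lastState_concat, beliefV_concat]
      have hrec := prFrom_lift M O U0 F0 σ r (pre ++ [(a, s')])
        (pret ++ [(a, (s', updateV M O U0 F0 (beliefV M O U0 F0 M.init pre) a s'))])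
        hlast'
        (by rw [lastState_concat, beliefV_concat]; exact hr)
        (by rw [beliefV_concat]
            exact fun p hp => hB p (List.mem_cons_of_mem _ hp))
      rw [beliefV_concat] at hrec
      simp only [prFrom]
      rw [hrec, hlast]
      have hstrat : σ.strat.toFun (M.init, O.obs M.init) pret a
          = (inducedV M O U0 F0 σ).toFun M.init pre a := by
        simp only [MarkovStrategy.strat, inducedV, hlast]
      rw [hstrat, hPval]

end Aux3

section Aux4

lemma hit_le (M : MDP S A) (O : ObsFun M) (U0 F0 U1 F1 : Set S)
    (σ : MarkovStrategy (augV M O U0 F0)) (k : ℕ) :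
    hitProbN (augV M O U0 F0) σ.strat.toFun (augU U1) (augF F1) (M.init, O.obs M.init) k
      ≤ hitProbN M (inducedV M O U0 F0 σ).toFun U1 F1 M.init k := by
  classical
  unfold hitProbN
  set Φ : (Fin k → A × (S × Set S)) → (Fin k → A × S) :=
    fun ft i => ((ft i).1, (ft i).2.1) with hΦ
  have hproj : ∀ ft : Fin k → A × (S × Set S),
      projL (List.ofFn ft) = List.ofFn (Φ ft) := by
    intro ft
    exact List.map_ofFn
  have key : ∀ ft : Fin k → A × (S × Set S),
      (isHist (augV M O U0 F0) (M.init, O.obs M.init) (List.ofFn ft) ∧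
        QRA (augU U1) (augF F1) (M.init, O.obs M.init) (List.ofFn ft) k) →
      (isHist M M.init (List.ofFn (Φ ft)) ∧ QRA U1 F1 M.init (List.ofFn (Φ ft)) k) ∧
      prHist (augV M O U0 F0) σ.strat.toFun (M.init, O.obs M.init) (List.ofFn ft)
        = prHist M (inducedV M O U0 F0 σ).toFun M.init (List.ofFn (Φ ft)) ∧
      List.ofFn ft = liftL M O U0 F0 (O.obs M.init) (List.ofFn (Φ ft)) := by
    rintro ft ⟨hh, hQ⟩
    have hlen : (List.ofFn ft).length = k := List.length_ofFn
    -- all beliefs along the history are nonempty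
    have hB : ∀ p ∈ List.ofFn ft, p.2.2 ≠ (∅ : Set S) := by
      intro p hp
      obtain ⟨i, hi, hig⟩ := List.mem_iff_getElem.mp hp
      have hst : stateAt (M.init, O.obs M.init) (List.ofFn ft) (i + 1) = p.2 := by
        simp only [stateAt, List.getElem?_eq_getElem hi, hig, Option.map_some,
          Option.getD_some]
      rcases Nat.lt_or_ge (i + 1) k with hik | hik
      · intro he
        exact hQ.2 (i + 1) hik
          (Set.mem_union_left _ (by rw [hst]; exact Or.inr he))
      · have hik' : i + 1 = k := le_antisymm (by omega) hik
        rw [hik'] at hst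
        have hF := hQ.1
        rw [hst] at hF
        exact hF.2
    obtain ⟨hlift, hhist⟩ := reconstruct M O U0 F0 (List.ofFn ft) M.init (O.obs M.init) hh hB
    rw [hproj ft] at hlift hhist
    -- the states along both histories agree componentwise
    have hst : ∀ i : ℕ, stateAt M.init (List.ofFn (Φ ft)) i
        = (stateAt (M.init, O.obs M.init) (List.ofFn ft) i).1 := by
      intro i
      rw [← hproj ft]
      exact stateAt_projL M.init (O.obs M.init) (List.ofFn ft) i
    -- beliefs at indices < k and at k are nonempty
    have hBat : ∀ i ≤ k, (stateAt (M.init, O.obs M.init) (List.ofFn ft) i).2 ≠ (∅ : Set S) := by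
      intro i hik
      cases i with
      | zero =>
          intro he
          have hm := O.mem_self M.init
          rw [show (stateAt (M.init, O.obs M.init) (List.ofFn ft) 0).2
            = O.obs M.init from rfl] at he
          rw [he] at hm
          exact Set.notMem_empty _ hm
      | succ i =>
          have hi : i < (List.ofFn ft).length := by omega
          have : stateAt (M.init, O.obs M.init) (List.ofFn ft) (i + 1)
              = ((List.ofFn ft)[i]'hi).2 := by
            simp only [stateAt, List.getElem?_eq_getElem hi, Option.map_some,
              Option.getD_some]
          rw [this]
          exact hB _ (List.getElem_mem hi)
    have hQ1 : QRA U1 F1 M.init (List.ofFn (Φ ft)) k := by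
      constructor
      · rw [hst k]
        exact hQ.1.1
      · intro i hik hmem
        have hnot := hQ.2 i hik
        have hne := hBat i (le_of_lt hik)
        rw [hst i] at hmem
        rcases hmem with hmU | hmF
        · exact hnot (Set.mem_union_left _ (Or.inl ⟨hmU, hne⟩))
        · exact hnot (Set.mem_union_right _ ⟨hmF, hne⟩)
    have hpr : prHist (augV M O U0 F0) σ.strat.toFun (M.init, O.obs M.init) (List.ofFn ft)
        = prHist M (inducedV M O U0 F0 σ).toFun M.init (List.ofFn (Φ ft)) := by
      have hpl := prFrom_lift M O U0 F0 σ (List.ofFn (Φ ft)) [] []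
        rfl
        (by simp only [beliefV, List.foldl_nil, lastState_nil]
            rw [← hlift]; exact hh)
        (by simp only [beliefV, List.foldl_nil]
            rw [← hlift]; exact hB)
      simp only [beliefV, List.foldl_nil] at hpl
      rw [← hlift] at hpl
      unfold prHist
      exact hpl
    exact ⟨⟨hhist, hQ1⟩, hpr, hlift⟩
  set T : (Fin k → A × S) → ℝ := fun f =>
    if isHist M M.init (List.ofFn f) ∧ QRA U1 F1 M.init (List.ofFn f) k
    then prHist M (inducedV M O U0 F0 σ).toFun M.init (List.ofFn f) else 0 with hT
  set Tt : (Fin k → A × (S × Set S)) → ℝ := fun ft =>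
    if isHist (augV M O U0 F0) (M.init, O.obs M.init) (List.ofFn ft) ∧
        QRA (augU U1) (augF F1) (M.init, O.obs M.init) (List.ofFn ft) k
    then prHist (augV M O U0 F0) σ.strat.toFun (M.init, O.obs M.init) (List.ofFn ft) else 0
    with hTt
  have hTnonneg : ∀ f : Fin k → A × S, 0 ≤ T f := by
    intro f
    rw [hT]
    dsimp only
    split_ifs with h
    · exact prFrom_nonneg M (inducedV M O U0 F0 σ) _ M.init []
    · exact le_rfl
  have hcond : ∀ ft : Fin k → A × (S × Set S), Tt ft ≠ 0 →
      isHist (augV M O U0 F0) (M.init, O.obs M.init) (List.ofFn ft) ∧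
        QRA (augU U1) (augF F1) (M.init, O.obs M.init) (List.ofFn ft) k := by
    intro ft h
    by_contra hcon
    exact h (by rw [hTt]; exact if_neg hcon)
  calc (∑ ft : Fin k → A × (S × Set S), Tt ft)
      = ∑ ft ∈ Finset.univ.filter (fun ft => Tt ft ≠ 0), Tt ft :=
        (Finset.sum_filter_of_ne fun x _ h => h).symm
    _ = ∑ ft ∈ Finset.univ.filter (fun ft => Tt ft ≠ 0), T (Φ ft) := by
        refine Finset.sum_congr rfl fun ft hft => ?_
        have hc := hcond ft (Finset.mem_filter.mp hft).2
        obtain ⟨hM, hpr, -⟩ := key ft hc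
        rw [hTt, hT]
        dsimp only
        rw [if_pos hc, if_pos hM, hpr]
    _ = ∑ f ∈ (Finset.univ.filter (fun ft => Tt ft ≠ 0)).image Φ, T f := by
        refine (Finset.sum_image ?_).symm
        intro x hx y hy hxy
        have hcx := key x (hcond x (Finset.mem_filter.mp hx).2)
        have hcy := key y (hcond y (Finset.mem_filter.mp hy).2)
        have : List.ofFn x = List.ofFn y := by
          rw [hcx.2.2, hcy.2.2, hxy]
        exact List.ofFn_injective this
    _ ≤ ∑ f : Fin k → A × S, T f :=
        Finset.sum_le_sum_of_subset_of_nonneg (Finset.subset_univ _)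
          fun f _ _ => hTnonneg f

end Aux4

/-- a Markov strategy of the action-visible augmented MDP `M~` that is
almost-sure winning from `(s0, DObs_S(s0))` for `¬U~1 𝖴 F~1` induces a finite-memory
strategy on `M` that is almost-sure winning from `s0` for `¬U1 𝖴 F1`. -/
theorem inducedV_ASW (M : MDP S A) (O : ObsFun M) (U0 F0 U1 F1 : Set S)
    (h0 : Disjoint U0 F0) (h1 : Disjoint U1 F1)
    (σ : MarkovStrategy (augV M O U0 F0))
    (hσ : prSat (augV M O U0 F0) σ.strat.toFun (augU U1) (augF F1)
      (M.init, O.obs M.init) = 1) :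
    prSat M (inducedV M O U0 F0 σ).toFun U1 F1 M.init = 1 := by
  have hle : ∀ n : ℕ,
      satProbN (augV M O U0 F0) σ.strat.toFun (augU U1) (augF F1)
          (M.init, O.obs M.init) n
        ≤ satProbN M (inducedV M O U0 F0 σ).toFun U1 F1 M.init n := by
    intro n
    rw [satProbN_eq (augV M O U0 F0) σ.strat (augU U1) (augF F1) _ n,
        satProbN_eq M (inducedV M O U0 F0 σ) U1 F1 _ n]
    exact Finset.sum_le_sum fun kk _ => hit_le M O U0 F0 U1 F1 σ kk
  have hub : ∀ n, satProbN M (inducedV M O U0 F0 σ).toFun U1 F1 M.init n ≤ 1 :=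
    fun n => satProbN_le_one M (inducedV M O U0 F0 σ) U1 F1 M.init n
  unfold prSat at hσ ⊢
  refine le_antisymm (ciSup_le hub) ?_
  rw [← hσ]
  exact ciSup_mono ⟨1, by rintro x ⟨n, rfl⟩; exact hub n⟩ hle
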